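/- Under the stated hypotheses, the regularized correlations dominate the true correlations: Corr(P, Q | ψ†, φ‡; λ) ≥ Corr(P, Q). -/

import Mathlib

open MeasureTheory ENNReal
open scoped RealInnerProductSpace

/-- The gradient of any function on a Euclidean space is measurable. -/
lemma measurable_gradient_aux {D : ℕ} (f : EuclideanSpace ℝ (Fin D) → ℝ) :
    Measurable (gradient f) := by
  have h : gradient f
      = fun x => (InnerProductSpace.toDual ℝ (EuclideanSpace ℝ (Fin D))).symm (fderiv ℝ f x) :=
    rfl
  rw [h]
  exact ((InnerProductSpace.toDual ℝ (EuclideanSpace ℝ (Fin D))).symm.continuous.measurable).comp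
    (measurable_fderiv ℝ f)

/-- Strong-convexity gradient inequality. -/
lemma strong_grad_ineq {F : Type*} [NormedAddCommGroup F] [InnerProductSpace ℝ F]
    [CompleteSpace F] {ψ : F → ℝ} (hψ : Differentiable ℝ ψ) {β : ℝ}
    (hc : ConvexOn ℝ Set.univ (fun x => ψ x - β / 2 * ‖x‖ ^ 2)) (a b : F) :
    ψ b + ⟪gradient ψ b, a - b⟫ + β / 2 * ‖a - b‖ ^ 2 ≤ ψ a := by
  set v := a - b with hv
  set k : ℝ → ℝ := fun t => ψ (b + t • v) - β / 2 * (t ^ 2 * ‖v‖ ^ 2) with hk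
  have hline : ∀ t : ℝ, ‖b + t • v‖ ^ 2 = ‖b‖ ^ 2 + 2 * t * ⟪b, v⟫ + t ^ 2 * ‖v‖ ^ 2 := by
    intro t
    rw [norm_add_sq_real, real_inner_smul_right, norm_smul]
    simp [mul_pow]
    ring
  -- convexity of k
  have hkconv : ConvexOn ℝ Set.univ k := by
    have h1 : ConvexOn ℝ Set.univ
        ((fun x => ψ x - β / 2 * ‖x‖ ^ 2) ∘ (AffineMap.lineMap b a : ℝ →ᵃ[ℝ] F)) := by
      have := hc.comp_affineMap (AffineMap.lineMap b a : ℝ →ᵃ[ℝ] F)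
      simpa using this
    have hlin : ConvexOn ℝ Set.univ (fun t : ℝ => t * (β * ⟪b, v⟫)) := by
      refine ⟨convex_univ, fun x _ y _ p q _ _ _ => ?_⟩
      simp only [smul_eq_mul]
      apply le_of_eq
      ring
    have h2 : ConvexOn ℝ Set.univ
        (fun t : ℝ => β / 2 * ‖b‖ ^ 2 + t * (β * ⟪b, v⟫)) :=
      (convexOn_const _ convex_univ).add hlin
    have heq : k = (fun t : ℝ =>
        ((fun x => ψ x - β / 2 * ‖x‖ ^ 2) ∘ (AffineMap.lineMap b a : ℝ →ᵃ[ℝ] F)) t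
          + (β / 2 * ‖b‖ ^ 2 + t * (β * ⟪b, v⟫))) := by
      funext t
      simp only [Function.comp_apply, AffineMap.lineMap_apply, vsub_eq_sub, vadd_eq_add, hk]
      rw [show t • (a - b) + b = b + t • v by rw [hv]; abel]
      rw [hline t]
      ring
    rw [heq]
    exact h1.add h2
  -- derivative of k at 0
  have hlineDeriv : HasDerivAt (fun t : ℝ => b + t • v) v 0 := by
    simpa using ((hasDerivAt_id (0 : ℝ)).smul_const v).const_add b
  have hF : HasFDerivAt ψ (InnerProductSpace.toDual ℝ F (gradient ψ b)) (b + (0 : ℝ) • v) := by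
    simpa using ((hψ b).hasGradientAt).hasFDerivAt
  have hcomp : HasDerivAt (fun t : ℝ => ψ (b + t • v)) ⟪gradient ψ b, v⟫ 0 := by
    have := hF.comp_hasDerivAt (0 : ℝ) hlineDeriv
    simpa [InnerProductSpace.toDual_apply_apply, Function.comp_def] using this
  have hquad : HasDerivAt (fun t : ℝ => β / 2 * (t ^ 2 * ‖v‖ ^ 2)) 0 0 := by
    have := (((hasDerivAt_pow 2 (0 : ℝ))).mul_const (‖v‖ ^ 2)).const_mul (β / 2)
    simpa using this
  have hkderiv : HasDerivAt k ⟪gradient ψ b, v⟫ 0 := by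
    have := hcomp.sub hquad
    rw [sub_zero] at this
    exact this
  have hslope := hkconv.le_slope_of_hasDerivAt (Set.mem_univ (0 : ℝ)) (Set.mem_univ (1 : ℝ))
    zero_lt_one hkderiv
  rw [slope_def_field] at hslope
  have hk1 : k 1 = ψ a - β / 2 * (1 * ‖v‖ ^ 2) := by
    simp [hk, hv]
  have hk0 : k 0 = ψ b := by simp [hk]
  rw [hk1, hk0] at hslope
  simp at hslope
  have hgv : ⟪gradient ψ b, v⟫ = (fderiv ℝ ψ b) v := by simp [gradient]
  linarith

/-- Correlation upper bound: the regularized correlations dominate the true correlations,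
`Corr(P, Q | ψ†, φ‡; λ) ≥ Corr(P, Q)`. -/
theorem regularized_corr_ge_corr {D : ℕ}
    (P Q : Measure (EuclideanSpace ℝ (Fin D)))
    [IsProbabilityMeasure P] [IsProbabilityMeasure Q]
    (hP2 : Integrable (fun x => ‖x‖ ^ 2) P)
    (hQ2 : Integrable (fun y => ‖y‖ ^ 2) Q)
    -- Brenier potentials
    (ψs φs : EuclideanSpace ℝ (Fin D) → ℝ)
    (hψs : Differentiable ℝ ψs) (hψsc : ConvexOn ℝ Set.univ ψs)
    (hφs : Differentiable ℝ φs) (hφsc : ConvexOn ℝ Set.univ φs)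
    (hinv : ∀ y, gradient ψs (gradient φs y) = y)
    (hQP : Q.map (gradient φs) = P)
    (hPQ : P.map (gradient ψs) = Q)
    -- discriminators
    (ψd : EuclideanSpace ℝ (Fin D) → ℝ) (hψd : Differentiable ℝ ψd)
    (βd : ℝ) (hβd : 0 < βd)
    (hstrong : ConvexOn ℝ Set.univ (fun x => ψd x - βd / 2 * ‖x‖ ^ 2))
    (φc : EuclideanSpace ℝ (Fin D) → ℝ) (hφc : Differentiable ℝ φc)
    (hφcc : ConvexOn ℝ Set.univ φc)
    (lam : ℝ) (hlam : 1 / βd < lam)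
    -- integrability of all the integrals involved
    (hI1 : Integrable ψd P)
    (hI2 : Integrable (fun y => ⟪gradient φc y, y⟫ - ψd (gradient φc y)) Q)
    (hI3 : Integrable (fun y => ‖gradient ψd (gradient φc y) - y‖ ^ 2) Q)
    (hI4 : Integrable (fun y => ⟪y, gradient φs y⟫) Q) :
    (∫ y, ⟪y, gradient φs y⟫ ∂Q) ≤
      (∫ x, ψd x ∂P) + (∫ y, (⟪gradient φc y, y⟫ - ψd (gradient φc y)) ∂Q)
        + lam / 2 * ∫ y, ‖gradient ψd (gradient φc y) - y‖ ^ 2 ∂Q := by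
  have hmes : Measurable (gradient φs) := measurable_gradient_aux φs
  have hψdmeas : AEStronglyMeasurable ψd (Q.map (gradient φs)) := by
    rw [hQP]; exact hI1.aestronglyMeasurable
  have hg1 : Integrable (fun y => ψd (gradient φs y)) Q := by
    have h' : Integrable ψd (Q.map (gradient φs)) := by rwa [hQP]
    exact (integrable_map_measure hψdmeas hmes.aemeasurable).mp h'
  have hPint : ∫ x, ψd x ∂P = ∫ y, ψd (gradient φs y) ∂Q := by
    rw [← hQP, integral_map hmes.aemeasurable hψdmeas]
  have hbl : 1 ≤ lam * βd := by
    rw [div_lt_iff₀ hβd] at hlam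
    linarith
  have key : ∀ y, ⟪y, gradient φs y⟫ ≤
      ψd (gradient φs y) + (⟪gradient φc y, y⟫ - ψd (gradient φc y))
        + lam / 2 * ‖gradient ψd (gradient φc y) - y‖ ^ 2 := by
    intro y
    set a := gradient φs y
    set b := gradient φc y
    set g := gradient ψd b
    have hsg := strong_grad_ineq hψd hstrong a b
    have hcs : -(‖g - y‖ * ‖a - b‖) ≤ ⟪g - y, a - b⟫ :=
      (abs_le.mp (abs_real_inner_le_norm (g - y) (a - b))).1
    have hexp : ⟪g - y, a - b⟫ = ⟪g, a - b⟫ - ⟪y, a⟫ + ⟪y, b⟫ := by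
      rw [inner_sub_left, inner_sub_right, inner_sub_right]
      ring
    have hba : ⟪b, y⟫ = ⟪y, b⟫ := real_inner_comm _ _
    nlinarith [sq_nonneg (‖g - y‖ - βd * ‖a - b‖), norm_nonneg (g - y), norm_nonneg (a - b),
      sq_nonneg (‖g - y‖), mul_le_mul_of_nonneg_right hbl (sq_nonneg (‖g - y‖)),
      mul_le_mul_of_nonneg_left hcs hβd.le]
  have hg : Integrable (fun y =>
      ψd (gradient φs y) + (⟪gradient φc y, y⟫ - ψd (gradient φc y))
        + lam / 2 * ‖gradient ψd (gradient φc y) - y‖ ^ 2) Q :=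
    (hg1.add hI2).add (hI3.const_mul (lam / 2))
  calc (∫ y, ⟪y, gradient φs y⟫ ∂Q)
      ≤ ∫ y, (ψd (gradient φs y) + (⟪gradient φc y, y⟫ - ψd (gradient φc y))
          + lam / 2 * ‖gradient ψd (gradient φc y) - y‖ ^ 2) ∂Q :=
        integral_mono hI4 hg key
    _ = (∫ x, ψd x ∂P) + (∫ y, (⟪gradient φc y, y⟫ - ψd (gradient φc y)) ∂Q)
        + lam / 2 * ∫ y, ‖gradient ψd (gradient φc y) - y‖ ^ 2 ∂Q := by
        have i12 : Integrable (fun y =>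
            ψd (gradient φs y) + (⟪gradient φc y, y⟫ - ψd (gradient φc y))) Q := hg1.add hI2
        have i3 : Integrable (fun y =>
            lam / 2 * ‖gradient ψd (gradient φc y) - y‖ ^ 2) Q := hI3.const_mul (lam / 2)
        rw [integral_add i12 i3, integral_add hg1 hI2, integral_const_mul, hPint]
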